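/- Given a Born structure presented as a para-Hermitian pair (η, K) with K = η⁻¹ω together with a metric H satisfying η⁻¹H = H⁻¹η and ω⁻¹H = -H⁻¹ω, the endomorphisms J := η⁻¹H and K := η⁻¹ω satisfy J² = id, K² = id, JK + KJ = 0, and I := JK satisfies I² = -id. -/
import Mathlib


/-- a Born structure given by a para-Hermitian pair `(η, ω)` and
a compatible metric `H` yields endomorphisms `J = η⁻¹H`, `K = η⁻¹ω` with
`J² = id`, `K² = id`, `JK + KJ = 0`, and `I = JK` with `I² = -id`. -/
theorem stmt11 {V : Type*} [AddCommGroup V] [Module ℝ V] [FiniteDimensional ℝ V]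
    (η H : V ≃ₗ[ℝ] Module.Dual ℝ V)
    (ω : V ≃ₗ[ℝ] Module.Dual ℝ V)
    (hηsymm : ∀ x y, η x y = η y x)
    (hHsymm : ∀ x y, H x y = H y x)
    (hωskew : ∀ x y, ω x y = - ω y x)
    -- para-Hermitian compatibility: (η⁻¹ω)² = id
    (hK2 : (η.symm.toLinearMap ∘ₗ ω.toLinearMap) ∘ₗ
        (η.symm.toLinearMap ∘ₗ ω.toLinearMap) = LinearMap.id)
    -- η⁻¹H = H⁻¹η
    (hJ : η.symm.toLinearMap ∘ₗ H.toLinearMap = H.symm.toLinearMap ∘ₗ η.toLinearMap)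
    -- ω⁻¹H = -H⁻¹ω
    (hIK : ω.symm.toLinearMap ∘ₗ H.toLinearMap
        = - (H.symm.toLinearMap ∘ₗ ω.toLinearMap)) :
    (η.symm.toLinearMap ∘ₗ H.toLinearMap) ∘ₗ (η.symm.toLinearMap ∘ₗ H.toLinearMap)
        = LinearMap.id ∧
    (η.symm.toLinearMap ∘ₗ ω.toLinearMap) ∘ₗ (η.symm.toLinearMap ∘ₗ ω.toLinearMap)
        = LinearMap.id ∧
    (η.symm.toLinearMap ∘ₗ H.toLinearMap) ∘ₗ (η.symm.toLinearMap ∘ₗ ω.toLinearMap)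
      + (η.symm.toLinearMap ∘ₗ ω.toLinearMap) ∘ₗ (η.symm.toLinearMap ∘ₗ H.toLinearMap)
        = 0 ∧
    ((η.symm.toLinearMap ∘ₗ H.toLinearMap) ∘ₗ (η.symm.toLinearMap ∘ₗ ω.toLinearMap)) ∘ₗ
      ((η.symm.toLinearMap ∘ₗ H.toLinearMap) ∘ₗ (η.symm.toLinearMap ∘ₗ ω.toLinearMap))
        = - LinearMap.id := by
  -- pointwise versions of the hypotheses
  have hK2' : ∀ x : V, η.symm (ω (η.symm (ω x))) = x := fun x => by
    simpa using LinearMap.ext_iff.mp hK2 x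
  have hJ' : ∀ x : V, η.symm (H x) = H.symm (η x) := fun x => by
    simpa using LinearMap.ext_iff.mp hJ x
  have hIK' : ∀ x : V, ω.symm (H x) = - H.symm (ω x) := fun x => by
    simpa using LinearMap.ext_iff.mp hIK x
  -- derived: η⁻¹ω = ω⁻¹η
  have hKw : ∀ x : V, η.symm (ω x) = ω.symm (η x) := fun x => by
    have h2 : ω (η.symm (ω x)) = η x := by
      have := congrArg η (hK2' x); simpa using this
    have := congrArg ω.symm h2
    simpa using this
  -- derived: H⁻¹ω = -ω⁻¹H
  have hHw : ∀ x : V, H.symm (ω x) = - ω.symm (H x) := fun x => by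
    rw [hIK' x]; simp
  -- J applied twice
  have hJsq : ∀ x : V, η.symm (H (η.symm (H x))) = x := fun x => by
    rw [hJ' x]; simp [hJ']
  -- JK = H⁻¹ω pointwise
  have hJK : ∀ x : V, η.symm (H (η.symm (ω x))) = H.symm (ω x) := fun x => by
    rw [hJ' (η.symm (ω x))]; simp
  -- KJ = ω⁻¹H pointwise
  have hKJ : ∀ x : V, η.symm (ω (η.symm (H x))) = ω.symm (H x) := fun x => by
    rw [hKw (η.symm (H x))]; simp
  refine ⟨?_, hK2, ?_, ?_⟩
  · ext x
    simpa using hJsq x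
  · ext x
    simp only [LinearMap.add_apply, LinearMap.coe_comp, Function.comp_apply,
      LinearEquiv.coe_coe, LinearMap.zero_apply]
    rw [hJK x, hKJ x, hHw x]
    abel
  · ext x
    simp only [LinearMap.coe_comp, Function.comp_apply, LinearEquiv.coe_coe,
      LinearMap.neg_apply, LinearMap.id_coe, id_eq]
    rw [hJK x, hHw x]
    simp [hJsq x]
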